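/- Let p ≥ 1, let X be a Banach space, let n ∈ ℕ, let m be a positive integer divisible by 4, let ν be a probability measure on ℤ_m^n, and let f : ℤ_m^n → X. Then for every ε ∈ {−1,1}^n, ∫_{ℤ_m^n} ‖f(x + (m/2)ε) − f(x)‖_X^p dμ(x) ≤ 2·3^{p−1} ∫_{ℤ_m^n} ‖f*ν(x) − f(x)‖_X^p dμ(x) + 3^{p−1} (m/4)^p ∫_{ℤ_m^n} ‖f*ν(x + ε) − f*ν(x − ε)‖_X^p dμ(x). -/

import Mathlib

open Finset

/-- The element of `ℤ_m^n` corresponding to a sign vector `ε ∈ {-1,1}^n`,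
via the natural map `ℤ → ℤ/mℤ` applied coordinatewise. -/
def signVec (m n : ℕ) (ε : Fin n → Bool) : Fin n → ZMod m :=
  fun i => if ε i then 1 else -1

/-- Convolution of `f : ℤ_m^n → X` with a probability measure `ν` on `ℤ_m^n`
(given by its weights): `f*ν(x) = ∑_y ν(y) • f(x - y)`. -/
noncomputable def conv {m n : ℕ} [NeZero m] {X : Type*} [NormedAddCommGroup X]
    [NormedSpace ℝ X] (ν : (Fin n → ZMod m) → ℝ) (f : (Fin n → ZMod m) → X)
    (x : Fin n → ZMod m) : X :=
  ∑ y : Fin n → ZMod m, ν y • f (x - y)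

lemma norm_sum_rpow_le {X : Type*} [NormedAddCommGroup X] {ι : Type*} (s : Finset ι)
    (z : ι → X) (p : ℝ) (hp : 1 ≤ p) :
    ‖∑ i ∈ s, z i‖ ^ p ≤ (s.card : ℝ) ^ (p - 1) * ∑ i ∈ s, ‖z i‖ ^ p := by
  calc ‖∑ i ∈ s, z i‖ ^ p ≤ (∑ i ∈ s, ‖z i‖) ^ p :=
        Real.rpow_le_rpow (norm_nonneg _) (norm_sum_le _ _) (le_trans zero_le_one hp)
    _ ≤ _ := Real.rpow_sum_le_const_mul_sum_rpow_of_nonneg s hp (fun i _ => norm_nonneg _)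

lemma norm_add3_rpow_le {X : Type*} [NormedAddCommGroup X] (p : ℝ) (hp : 1 ≤ p) (a b c : X) :
    ‖a + b + c‖ ^ p ≤ 3 ^ (p - 1) * (‖a‖ ^ p + ‖b‖ ^ p + ‖c‖ ^ p) := by
  have := norm_sum_rpow_le (univ : Finset (Fin 3)) ![a, b, c] p hp
  simpa [Fin.sum_univ_three, add_assoc] using this

lemma sum_shift {m n : ℕ} [NeZero m] (F : (Fin n → ZMod m) → ℝ) (c : Fin n → ZMod m) :
    ∑ x : Fin n → ZMod m, F (x + c) = ∑ x : Fin n → ZMod m, F x :=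
  Fintype.sum_equiv (Equiv.addRight c) _ _ (fun _ => rfl)

/-- The basic smoothing-and-approximation inequality: for `m` divisible by `4`, a probability
measure `ν` on `ℤ_m^n`, `f : ℤ_m^n → X` and any sign vector `ε ∈ {-1,1}^n`,
`∫ ‖f(x + (m/2)ε) - f(x)‖^p dμ(x) ≤ 2·3^(p-1) ∫ ‖f*ν(x) - f(x)‖^p dμ(x)
  + 3^(p-1) (m/4)^p ∫ ‖f*ν(x+ε) - f*ν(x-ε)‖^p dμ(x)`. -/
theorem smoothing_approximation_scheme (p : ℝ) (hp : 1 ≤ p)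
    (X : Type*) [NormedAddCommGroup X] [NormedSpace ℝ X] [CompleteSpace X]
    (n m : ℕ) [NeZero m] (hm : m % 4 = 0)
    (ν : (Fin n → ZMod m) → ℝ) (hν : ∀ y, 0 ≤ ν y)
    (hν1 : ∑ y : Fin n → ZMod m, ν y = 1)
    (f : (Fin n → ZMod m) → X) (ε : Fin n → Bool) :
    (∑ x : Fin n → ZMod m, ‖f (x + (m / 2) • signVec m n ε) - f x‖ ^ p) / (m : ℝ) ^ n ≤
      2 * 3 ^ (p - 1) *
          ((∑ x : Fin n → ZMod m, ‖conv ν f x - f x‖ ^ p) / (m : ℝ) ^ n) +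
        3 ^ (p - 1) * ((m : ℝ) / 4) ^ p *
          ((∑ x : Fin n → ZMod m,
              ‖conv ν f (x + signVec m n ε) - conv ν f (x - signVec m n ε)‖ ^ p) /
            (m : ℝ) ^ n) := by
  have hm0 : m ≠ 0 := NeZero.ne m
  set e := signVec m n ε with he
  set g := conv ν f with hg
  set k := m / 4 with hk
  have hmk : m = 4 * k := by omega
  have hk1 : 1 ≤ k := by omega
  have hkpos : (0:ℝ) < (k : ℝ) := by exact_mod_cast hk1
  set c : Fin n → ZMod m := (m / 2) • e with hc
  have hc2 : c = (2 * k) • e := by rw [hc, show m / 2 = 2 * k by omega]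
  have hM : (0:ℝ) < (m : ℝ) ^ n := by positivity
  have h3nonneg : (0:ℝ) ≤ 3 ^ (p - 1) := Real.rpow_nonneg (by norm_num) _
  set S0 := ∑ x : Fin n → ZMod m, ‖g x - f x‖ ^ p with hS0
  set S1 := ∑ x : Fin n → ZMod m, ‖g (x + e) - g (x - e)‖ ^ p with hS1
  set T := ∑ x : Fin n → ZMod m, ‖f (x + c) - f x‖ ^ p with hT
  -- middle term bound
  have mid : ∑ x : Fin n → ZMod m, ‖g (x + c) - g x‖ ^ p ≤ (k : ℝ) ^ p * S1 := by
    have step1 : ∀ x : Fin n → ZMod m, ‖g (x + c) - g x‖ ^ p ≤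
        (k : ℝ) ^ (p - 1) *
          ∑ j ∈ range k, ‖g (x + (2 * (j + 1)) • e) - g (x + (2 * j) • e)‖ ^ p := by
      intro x
      have tele : g (x + c) - g x =
          ∑ j ∈ range k, (g (x + (2 * (j + 1)) • e) - g (x + (2 * j) • e)) := by
        rw [Finset.sum_range_sub (fun j => g (x + (2 * j) • e))]
        rw [hc2]
        norm_num
      rw [tele]
      have := norm_sum_rpow_le (range k)
        (fun j => g (x + (2 * (j + 1)) • e) - g (x + (2 * j) • e)) p hp
      simpa [card_range] using this
    have shiftj : ∀ j : ℕ,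
        (∑ x : Fin n → ZMod m, ‖g (x + (2 * (j + 1)) • e) - g (x + (2 * j) • e)‖ ^ p) = S1 := by
      intro j
      have h1 : ∀ x : Fin n → ZMod m, x + (2 * (j + 1)) • e = (x + (2 * j + 1) • e) + e := by
        intro x
        rw [add_assoc]
        congr 1
        rw [show 2 * (j + 1) = (2 * j + 1) + 1 by ring, add_nsmul, one_nsmul]
      have h2 : ∀ x : Fin n → ZMod m, x + (2 * j) • e = (x + (2 * j + 1) • e) - e := by
        intro x
        rw [add_sub_assoc]
        congr 1
        rw [show 2 * j + 1 = (2 * j) + 1 by ring, add_nsmul, one_nsmul]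
        abel
      calc (∑ x : Fin n → ZMod m, ‖g (x + (2 * (j + 1)) • e) - g (x + (2 * j) • e)‖ ^ p)
          = ∑ x : Fin n → ZMod m,
              (fun y => ‖g (y + e) - g (y - e)‖ ^ p) (x + (2 * j + 1) • e) := by
            refine Finset.sum_congr rfl fun x _ => ?_
            simp only
            rw [h1 x, h2 x]
        _ = S1 := by
            simpa using sum_shift (fun y => ‖g (y + e) - g (y - e)‖ ^ p) ((2 * j + 1) • e)
    calc ∑ x : Fin n → ZMod m, ‖g (x + c) - g x‖ ^ p
        ≤ ∑ x : Fin n → ZMod m, (k : ℝ) ^ (p - 1) *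
            ∑ j ∈ range k, ‖g (x + (2 * (j + 1)) • e) - g (x + (2 * j) • e)‖ ^ p :=
          Finset.sum_le_sum fun x _ => step1 x
      _ = (k : ℝ) ^ (p - 1) * ∑ j ∈ range k,
            ∑ x : Fin n → ZMod m, ‖g (x + (2 * (j + 1)) • e) - g (x + (2 * j) • e)‖ ^ p := by
          rw [← Finset.mul_sum, Finset.sum_comm]
      _ = (k : ℝ) ^ (p - 1) * ∑ j ∈ range k, S1 := by
          rw [Finset.sum_congr rfl fun j _ => shiftj j]
      _ = (k : ℝ) ^ (p - 1) * ((k : ℝ) * S1) := by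
          rw [Finset.sum_const, card_range, nsmul_eq_mul]
      _ = (k : ℝ) ^ p * S1 := by
          rw [← mul_assoc]
          congr 1
          calc (k:ℝ) ^ (p - 1) * (k:ℝ) = (k:ℝ) ^ (p - 1) * (k:ℝ) ^ (1:ℝ) := by
                rw [Real.rpow_one]
            _ = (k:ℝ) ^ (p - 1 + 1) := (Real.rpow_add hkpos _ _).symm
            _ = (k:ℝ) ^ p := by ring_nf
  -- pointwise three-term bound
  have pt : ∀ x : Fin n → ZMod m, ‖f (x + c) - f x‖ ^ p ≤
      3 ^ (p - 1) * (‖g (x + c) - f (x + c)‖ ^ p + ‖g (x + c) - g x‖ ^ p + ‖g x - f x‖ ^ p) := by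
    intro x
    have key : f (x + c) - f x =
        -(g (x + c) - f (x + c)) + (g (x + c) - g x) + (g x - f x) := by abel
    calc ‖f (x + c) - f x‖ ^ p
        = ‖-(g (x + c) - f (x + c)) + (g (x + c) - g x) + (g x - f x)‖ ^ p := by rw [← key]
      _ ≤ 3 ^ (p - 1) * (‖-(g (x + c) - f (x + c))‖ ^ p + ‖g (x + c) - g x‖ ^ p
            + ‖g x - f x‖ ^ p) := norm_add3_rpow_le p hp _ _ _
      _ = _ := by rw [norm_neg]
  have shift0 : (∑ x : Fin n → ZMod m, ‖g (x + c) - f (x + c)‖ ^ p) = S0 :=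
    sum_shift (fun y => ‖g y - f y‖ ^ p) c
  have main : T ≤ 2 * 3 ^ (p - 1) * S0 + 3 ^ (p - 1) * (k : ℝ) ^ p * S1 := by
    calc T ≤ ∑ x : Fin n → ZMod m, 3 ^ (p - 1) *
          (‖g (x + c) - f (x + c)‖ ^ p + ‖g (x + c) - g x‖ ^ p + ‖g x - f x‖ ^ p) :=
        Finset.sum_le_sum fun x _ => pt x
      _ = 3 ^ (p - 1) * ((∑ x : Fin n → ZMod m, ‖g (x + c) - f (x + c)‖ ^ p)
            + (∑ x : Fin n → ZMod m, ‖g (x + c) - g x‖ ^ p) + S0) := by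
          rw [← Finset.mul_sum, Finset.sum_add_distrib, Finset.sum_add_distrib]
      _ ≤ 3 ^ (p - 1) * (S0 + (k : ℝ) ^ p * S1 + S0) := by
          rw [shift0]
          apply mul_le_mul_of_nonneg_left _ h3nonneg
          have := mid
          linarith
      _ = 2 * 3 ^ (p - 1) * S0 + 3 ^ (p - 1) * (k : ℝ) ^ p * S1 := by ring
  have hm4 : (m : ℝ) / 4 = (k : ℝ) := by rw [hmk]; push_cast; ring
  rw [hm4]
  rw [← mul_div_assoc, ← mul_div_assoc, ← add_div]
  exact div_le_div_of_nonneg_right main hM.le
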